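/- Let r ≥ 2, q = exp(iπ/r), and let α ∈ ℂ ∖ (ℤ ∖ rℤ). For integers n ≥ 1, f ∈ ℤ, define N(K^f_{2n+1}(α)) = Σ_{k ∈ H_r} q^{f·t_α + (2n+1)/2 · (−2t_α + t_{2α+k})} · d(2α+k), where t_β = (β² − (r−1)²)/2, H_r = {1−r, …, r−1}, and d is the modified dimension. Then for r = 5, n = 1, f = −2 this equals 5·q^{α²/2}·(q³{3α} + q{5α} − q^{−1}{9α})/{5α}, where {x} = q^x − q^{−x}. -/

import Mathlib

/-- `q^x = exp(xiπ/5)` for `q = exp(iπ/5)`. -/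
noncomputable def qexp5 (x : ℂ) : ℂ := Complex.exp (x * Real.pi * Complex.I / 5)

/-- `{x} = q^x - q^{-x}`. -/
noncomputable def qn5 (x : ℂ) : ℂ := qexp5 x - qexp5 (-x)

/-- `H_5 = {-4,-2,0,2,4}`. -/
def H5 : Finset ℤ := {-4, -2, 0, 2, 4}

/-- The modified dimension `d(β) = 5{β}/{5β}` for `r = 5`. -/
noncomputable def d5 (β : ℂ) : ℂ := 5 * qn5 β / qn5 (5 * β)

/-- The twist exponent `t_β = (β² - 16)/2` for `r = 5`. -/
noncomputable def t5 (β : ℂ) : ℂ := (β ^ 2 - 16) / 2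

lemma qexp5_add (x y : ℂ) : qexp5 (x + y) = qexp5 x * qexp5 y := by
  simp only [qexp5]
  rw [← Complex.exp_add]
  congr 1
  ring

lemma qexp5_intmul (m : ℤ) (x : ℂ) : qexp5 ((m : ℂ) * x) = qexp5 x ^ m := by
  simp only [qexp5]
  rw [← Complex.exp_int_mul]
  congr 1
  ring

lemma qexp5_ne_zero (x : ℂ) : qexp5 x ≠ 0 := Complex.exp_ne_zero _

lemma qexp5_five : qexp5 5 = -1 := by
  simp only [qexp5]
  rw [show (5 : ℂ) * Real.pi * Complex.I / 5 = Real.pi * Complex.I by ring]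
  exact Complex.exp_pi_mul_I

lemma qexp5_one_pow_five : qexp5 1 ^ 5 = -1 := by
  rw [show qexp5 1 ^ 5 = qexp5 1 ^ ((5 : ℤ)) from (zpow_ofNat _ 5).symm,
    ← qexp5_intmul]
  norm_num
  exact qexp5_five

lemma qn5_eq_zero (x : ℂ) (h : qn5 x = 0) : ∃ n : ℤ, x = 5 * n := by
  have h1 : Complex.exp (x * Real.pi * Complex.I / 5)
      = Complex.exp (-x * Real.pi * Complex.I / 5) := by
    have := sub_eq_zero.mp h
    simpa [qn5, qexp5] using sub_eq_zero.mp h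
  rw [Complex.exp_eq_exp_iff_exists_int] at h1
  obtain ⟨n, hn⟩ := h1
  refine ⟨n, ?_⟩
  have hπ : (Real.pi : ℂ) ≠ 0 := by
    exact_mod_cast Real.pi_ne_zero
  have h2 : x * ((Real.pi : ℂ) * Complex.I) = (5 * n) * ((Real.pi : ℂ) * Complex.I) := by
    linear_combination (5 / 2 : ℂ) * hn
  exact mul_right_cancel₀ (mul_ne_zero hπ Complex.I_ne_zero) h2

set_option maxHeartbeats 4000000 in
/-- For `r = 5`, `n = 1`, `f = -2`, the invariant of the framed trefoil
`Σ_{k∈H_5} q^{f t_α + (3/2)(-2t_α + t_{2α+k})} d(2α+k)` equals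
`5 q^{α²/2}(q³{3α} + q{5α} - q⁻¹{9α})/{5α}`. -/
theorem stmt16 (α : ℂ)
    (hα : ∀ k ∈ H5, ∀ n : ℤ, (n : ℂ) = 2 * α + (k : ℂ) → (5 : ℤ) ∣ n) :
    ∑ k ∈ H5, qexp5 ((-2) * t5 α + (3 / 2) * (-2 * t5 α + t5 (2 * α + (k : ℂ)))) *
        d5 (2 * α + (k : ℂ)) =
      5 * qexp5 (α ^ 2 / 2) *
        (qexp5 3 * qn5 (3 * α) + qexp5 1 * qn5 (5 * α) - qexp5 (-1) * qn5 (9 * α)) /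
          qn5 (5 * α) := by
  rw [show (H5 : Finset ℤ) = insert (-4) (insert (-2) (insert 0 (insert 2 {4}))) from rfl,
      Finset.sum_insert (by decide), Finset.sum_insert (by decide),
      Finset.sum_insert (by decide), Finset.sum_insert (by decide),
      Finset.sum_singleton]
  push_cast
  have key : ∀ (s : ℂ) (m n : ℤ), s = (m : ℂ) * α + (n : ℂ) →
      qexp5 s = qexp5 α ^ m * qexp5 1 ^ n := by
    intro s m n hs
    rw [hs, qexp5_add, qexp5_intmul]
    congr 1
    rw [show ((n : ℂ)) = (n : ℂ) * 1 by ring, qexp5_intmul]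
  have keyv : ∀ (s : ℂ) (m n : ℤ), s = α ^ 2 / 2 + ((m : ℂ) * α + (n : ℂ)) →
      qexp5 s = qexp5 (α ^ 2 / 2) * (qexp5 α ^ m * qexp5 1 ^ n) := by
    intro s m n hs
    rw [hs, qexp5_add, key _ m n rfl]
  have keyn : ∀ (s : ℂ) (m n : ℤ), s = (m : ℂ) * α + (n : ℂ) →
      qn5 s = qexp5 α ^ m * qexp5 1 ^ n - qexp5 α ^ (-m) * qexp5 1 ^ (-n) := by
    intro s m n hs
    unfold qn5
    rw [key s m n hs, key (-s) (-m) (-n) (by rw [hs]; push_cast; ring)]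
  have hu : qexp5 α ≠ 0 := qexp5_ne_zero _
  have hq : qexp5 1 ≠ 0 := qexp5_ne_zero _
  have hq5 : qexp5 1 ^ 5 = -1 := qexp5_one_pow_five
  have q10 : qexp5 1 ^ 10 = 1 := by rw [show 10 = 5 * 2 from rfl, pow_mul, hq5]; ring
  have q20 : qexp5 1 ^ 20 = 1 := by rw [show 20 = 10 * 2 from rfl, pow_mul, q10]; ring
  have q40 : qexp5 1 ^ 40 = 1 := by rw [show 40 = 10 * 4 from rfl, pow_mul, q10]; ring
  have q31 : qexp5 1 ^ 31 = qexp5 1 := by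
    rw [show 31 = 10 * 3 + 1 from rfl, pow_add, pow_mul, q10]; ring
  have q28 : qexp5 1 ^ 28 = -(qexp5 1 ^ 3) := by
    rw [show 28 = 5 * 5 + 3 from rfl, pow_add, pow_mul, hq5]; ring
  have qi1 : (qexp5 1)⁻¹ = -(qexp5 1 ^ 4) := by
    refine inv_eq_of_mul_eq_one_right ?_
    calc qexp5 1 * -(qexp5 1 ^ 4) = -(qexp5 1 ^ 5) := by ring
    _ = 1 := by rw [hq5]; ring
  have qi2 : (qexp5 1 ^ 2)⁻¹ = -(qexp5 1 ^ 3) := by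
    refine inv_eq_of_mul_eq_one_right ?_
    calc qexp5 1 ^ 2 * -(qexp5 1 ^ 3) = -(qexp5 1 ^ 5) := by ring
    _ = 1 := by rw [hq5]; ring
  have qi4 : (qexp5 1 ^ 4)⁻¹ = -(qexp5 1) := by
    refine inv_eq_of_mul_eq_one_right ?_
    calc qexp5 1 ^ 4 * -(qexp5 1) = -(qexp5 1 ^ 5) := by ring
    _ = 1 := by rw [hq5]; ring
  have hS : qn5 (5 * α) ≠ 0 := by
    intro h
    obtain ⟨n, hn⟩ := qn5_eq_zero _ h
    have hα' : α = (n : ℂ) := by linear_combination hn / 5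
    have d1 := hα 2 (by decide) (2 * n + 2) (by rw [hα']; push_cast; ring)
    have d2 := hα 4 (by decide) (2 * n + 4) (by rw [hα']; push_cast; ring)
    omega
  have hD : qn5 (10 * α) ≠ 0 := by
    intro h
    obtain ⟨n, hn⟩ := qn5_eq_zero _ h
    have hα' : 2 * α = (n : ℂ) := by linear_combination hn / 5
    have d1 := hα 2 (by decide) (n + 2) (by push_cast; linear_combination -hα')
    have d2 := hα 4 (by decide) (n + 4) (by push_cast; linear_combination -hα')
    omega
  have hB0 : qexp5 α ^ 5 - (qexp5 α ^ 5)⁻¹ ≠ 0 := by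
    have h := hS
    rw [keyn (5 * α) 5 0 (by push_cast; ring)] at h
    simpa using h
  have hA0 : qexp5 α ^ 10 - (qexp5 α ^ 10)⁻¹ ≠ 0 := by
    have h := hD
    rw [keyn (10 * α) 10 0 (by push_cast; ring)] at h
    simpa using h
  simp only [d5]
  rw [keyv (-2 * t5 α + 3 / 2 * (-2 * t5 α + t5 (2 * α + -4))) (-12) 40
        (by unfold t5; push_cast; ring),
      keyv (-2 * t5 α + 3 / 2 * (-2 * t5 α + t5 (2 * α + -2))) (-6) 31
        (by unfold t5; push_cast; ring),
      keyv (-2 * t5 α + 3 / 2 * (-2 * t5 α + t5 (2 * α + 0))) 0 28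
        (by unfold t5; push_cast; ring),
      keyv (-2 * t5 α + 3 / 2 * (-2 * t5 α + t5 (2 * α + 2))) 6 31
        (by unfold t5; push_cast; ring),
      keyv (-2 * t5 α + 3 / 2 * (-2 * t5 α + t5 (2 * α + 4))) 12 40
        (by unfold t5; push_cast; ring),
      keyn (2 * α + -4) 2 (-4) (by push_cast; ring),
      keyn (2 * α + -2) 2 (-2) (by push_cast; ring),
      keyn (2 * α + 0) 2 0 (by push_cast; ring),
      keyn (2 * α + 2) 2 2 (by push_cast; ring),
      keyn (2 * α + 4) 2 4 (by push_cast; ring),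
      keyn (5 * (2 * α + -4)) 10 (-20) (by push_cast; ring),
      keyn (5 * (2 * α + -2)) 10 (-10) (by push_cast; ring),
      keyn (5 * (2 * α + 0)) 10 0 (by push_cast; ring),
      keyn (5 * (2 * α + 2)) 10 10 (by push_cast; ring),
      keyn (5 * (2 * α + 4)) 10 20 (by push_cast; ring),
      key 3 0 3 (by push_cast; ring),
      key (-1) 0 (-1) (by push_cast; ring),
      keyn (3 * α) 3 0 (by push_cast; ring),
      keyn (5 * α) 5 0 (by push_cast; ring),
      keyn (9 * α) 9 0 (by push_cast; ring)]
  simp only [zpow_neg, zpow_ofNat, zpow_zero, zpow_one, pow_zero, inv_one, one_mul, mul_one,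
    q10, q20, q40, q31, q28, qi1, qi2, qi4, pow_one, inv_neg, inv_inv, neg_neg]
  obtain ⟨V, hV⟩ : ∃ V, qexp5 (α ^ 2 / 2) = V := ⟨_, rfl⟩
  obtain ⟨U, hU⟩ : ∃ U, qexp5 α = U := ⟨_, rfl⟩
  obtain ⟨Q, hQ⟩ : ∃ Q, qexp5 1 = Q := ⟨_, rfl⟩
  rw [hU] at hu hA0 hB0 ⊢
  rw [hQ] at hq hq5 ⊢
  rw [hV]
  simp only [← mul_div_assoc, ← add_div]
  rw [div_eq_div_iff hA0 hB0]
  field_simp [hu]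
  ring
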